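/- Let c ≠ 0 be a real constant. There is no twice-differentiable Lagrangian L(q, q̇) : ℝ × ℝ → ℝ with ∂²L/∂q̇² nowhere zero such that for all (q, q̇): c·q̇ = (∂²L/∂q̇²)⁻¹ · (∂L/∂q - (∂²L/∂q̇∂q)·q̇). In other words, the linear damping force f(q,q̇) = c·q̇ cannot be represented by any time-independent Lagrangian via the Euler–Lagrange acceleration formula. -/

import Mathlib

/-- Lemma A.2: linear damping `f(q, q̇) = c·q̇` with `c ≠ 0` is not generated by
any twice-differentiable time-independent Lagrangian via the Euler–Lagrange
acceleration formula. -/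
theorem stmt_8 (c : ℝ) (hc : c ≠ 0) :
    ¬ ∃ L : ℝ × ℝ → ℝ, ContDiff ℝ 2 L ∧
      (∀ a b : ℝ, deriv (fun v => deriv (fun w => L (a, w)) v) b ≠ 0) ∧
      (∀ a b : ℝ, c * b =
        (deriv (fun v => deriv (fun w => L (a, w)) v) b)⁻¹ *
          (deriv (fun u => L (u, b)) a
            - deriv (fun u => deriv (fun w => L (u, w)) b) a * b)) := by
  rintro ⟨L, hL, hnz, heq⟩
  have hLd : Differentiable ℝ L := hL.differentiable (by norm_num)
  set G : ℝ × ℝ → ℝ := fun p => fderiv ℝ L p (0, 1) with hGdef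
  have hG : ContDiff ℝ 1 G :=
    (hL.fderiv_right (m := 1) (by norm_num)).clm_apply contDiff_const
  have hGd : Differentiable ℝ G := hG.differentiable (by norm_num)
  -- curves
  have curve_v : ∀ a b : ℝ, HasDerivAt (fun w : ℝ => ((a, w) : ℝ × ℝ)) (0, 1) b :=
    fun a b => (hasDerivAt_const b a).prodMk (hasDerivAt_id b)
  have curve_u : ∀ a b : ℝ, HasDerivAt (fun u : ℝ => ((u, b) : ℝ × ℝ)) (1, 0) a :=
    fun a b => (hasDerivAt_id a).prodMk (hasDerivAt_const a b)
  -- slice derivatives of L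
  have hLv : ∀ a b : ℝ, HasDerivAt (fun w => L (a, w)) (G (a, b)) b :=
    fun a b => (hLd (a, b)).hasFDerivAt.comp_hasDerivAt b (curve_v a b)
  have hLu : ∀ a b : ℝ, HasDerivAt (fun u => L (u, b)) (fderiv ℝ L (a, b) (1, 0)) a :=
    fun a b => (hLd (a, b)).hasFDerivAt.comp_hasDerivAt a (curve_u a b)
  -- slice derivatives of G
  have hGv : ∀ a b : ℝ, HasDerivAt (fun v => G (a, v)) (fderiv ℝ G (a, b) (0, 1)) b :=
    fun a b => (hGd (a, b)).hasFDerivAt.comp_hasDerivAt b (curve_v a b)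
  have hGu : ∀ a b : ℝ, HasDerivAt (fun u => G (u, b)) (fderiv ℝ G (a, b) (1, 0)) a :=
    fun a b => by have := (hGd (a, b)).hasFDerivAt.comp_hasDerivAt a (curve_u a b); exact this
  -- abbreviations
  set L1 : ℝ → ℝ → ℝ := fun a b => fderiv ℝ L (a, b) (1, 0) with hL1
  set G1 : ℝ → ℝ → ℝ := fun a b => fderiv ℝ G (a, b) (1, 0) with hG1
  set G2 : ℝ → ℝ → ℝ := fun a b => fderiv ℝ G (a, b) (0, 1) with hG2
  -- rewrite the hypotheses in terms of G1, G2, L1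
  have hinner : ∀ a : ℝ, (fun v => deriv (fun w => L (a, w)) v) = fun v => G (a, v) := by
    intro a; funext v; exact (hLv a v).deriv
  have hnz' : ∀ a b : ℝ, G2 a b ≠ 0 := by
    intro a b
    have := hnz a b
    rwa [hinner a, (hGv a b).deriv] at this
  have heq' : ∀ a b : ℝ, c * b * G2 a b = L1 a b - G1 a b * b := by
    intro a b
    have h := heq a b
    rw [hinner a, (hGv a b).deriv, (hLu a b).deriv] at h
    have h2 : (fun u => deriv (fun w => L (u, w)) b) = fun u => G (u, b) := by
      funext u; exact (hLv u b).deriv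
    rw [h2, (hGu a b).deriv] at h
    have h3 : c * b = (G2 a b)⁻¹ * (L1 a b - G1 a b * b) := h
    rw [inv_mul_eq_div, eq_div_iff (hnz' a b)] at h3
    linear_combination h3
  -- energy-like function
  set E : ℝ × ℝ → ℝ := fun p => L p - p.2 * G p with hEdef
  -- E is constant along lines t ↦ (t, s + c t)
  have hconst : ∀ s t : ℝ, E (t, s + c * t) = E (0, s + c * 0) := by
    intro s t
    have hφ : ∀ t : ℝ, HasDerivAt (fun t => E (t, s + c * t)) 0 t := by
      intro t
      have hcurve : HasDerivAt (fun t : ℝ => ((t, s + c * t) : ℝ × ℝ)) (1, c) t := by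
        refine (hasDerivAt_id t).prodMk ?_
        simpa using ((hasDerivAt_id t).const_mul c).const_add s
      have h1 : HasDerivAt (fun t => L (t, s + c * t))
          (fderiv ℝ L (t, s + c * t) (1, c)) t :=
        (hLd _).hasFDerivAt.comp_hasDerivAt t hcurve
      have h2 : HasDerivAt (fun t => G (t, s + c * t))
          (fderiv ℝ G (t, s + c * t) (1, c)) t :=
        (hGd _).hasFDerivAt.comp_hasDerivAt t hcurve
      have h3 : HasDerivAt (fun t => (s + c * t) * G (t, s + c * t))
          (c * G (t, s + c * t) + (s + c * t) * fderiv ℝ G (t, s + c * t) (1, c)) t := by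
        have hs : HasDerivAt (fun t : ℝ => s + c * t) c t := by
          simpa using ((hasDerivAt_id t).const_mul c).const_add s
        simpa using hs.fun_mul h2
      have h4 := h1.sub h3
      -- decompose directional derivatives
      have hdL : fderiv ℝ L (t, s + c * t) (1, c)
          = L1 t (s + c * t) + c * G (t, s + c * t) := by
        have : ((1 : ℝ), c) = ((1 : ℝ), (0 : ℝ)) + c • ((0 : ℝ), (1 : ℝ)) := by
          simp [Prod.ext_iff]
        rw [this, map_add, map_smul]
        simp [hL1, hGdef, smul_eq_mul]
      have hdG : fderiv ℝ G (t, s + c * t) (1, c)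
          = G1 t (s + c * t) + c * G2 t (s + c * t) := by
        have : ((1 : ℝ), c) = ((1 : ℝ), (0 : ℝ)) + c • ((0 : ℝ), (1 : ℝ)) := by
          simp [Prod.ext_iff]
        rw [this, map_add, map_smul]
        simp [hG1, hG2, smul_eq_mul]
      rw [hdL, hdG] at h4
      have key := heq' t (s + c * t)
      have : L1 t (s + c * t) + c * G (t, s + c * t) -
          (c * G (t, s + c * t) +
            (s + c * t) * (G1 t (s + c * t) + c * G2 t (s + c * t))) = 0 := by
        linear_combination -key
      rw [this] at h4
      exact h4
    exact is_const_of_deriv_eq_zero (fun x => (hφ x).differentiableAt)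
      (fun x => (hφ x).deriv) t 0
  -- E(a,b) = F(b - c a) where F s = E(0,s)
  have hEF : ∀ a b : ℝ, E (a, b) = E (0, b - c * a) := by
    intro a b
    have := hconst (b - c * a) a
    simpa using this
  -- slice derivative of E in second variable
  have hEv : ∀ a b : ℝ, HasDerivAt (fun v => E (a, v)) (-(b * G2 a b)) b := by
    intro a b
    have h3 : HasDerivAt (fun v : ℝ => v * G (a, v)) (G (a, b) + b * G2 a b) b := by
      simpa using (hasDerivAt_id b).fun_mul (hGv a b)
    have := (hLv a b).fun_sub h3
    simpa using this.congr_deriv (by ring)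
  -- compare the two computations of ∂_b E at (a, b)
  have hkey : ∀ a b : ℝ, b * G2 a b = (b - c * a) * G2 0 (b - c * a) := by
    intro a b
    have hfun : (fun v => E (a, v)) = fun v => E (0, v - c * a) := by
      funext v; exact hEF a v
    have h1 : HasDerivAt (fun v => E (0, v - c * a))
        (-((b - c * a) * G2 0 (b - c * a))) b := by
      have hinner2 : HasDerivAt (fun v : ℝ => v - c * a) 1 b := by
        simpa using (hasDerivAt_id b).sub_const (c * a)
      simpa [Function.comp_def] using (hEv 0 (b - c * a)).comp b hinner2
    have h2 := hEv a b
    rw [hfun] at h2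
    have := h1.unique h2
    linarith [this]
  -- set b = 0: x * G2 0 x = 0 for all x
  have hzero : ∀ x : ℝ, x * G2 0 x = 0 := by
    intro x
    have := hkey (-x / c) 0
    have hx : (0 : ℝ) - c * (-x / c) = x := by field_simp; ring
    rw [hx] at this
    linarith [this]
  have h1 := hzero 1
  have := hnz' 0 1
  simp at h1
  exact this h1
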